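/- For every n ≠ 2 and every bipartite graph H, the direct product Kₙ × H is type I, i.e., χ''(Kₙ × H) = (n−1)Δ(H) + 1 (when n ≥ 3 and H has an edge). -/

import Mathlib

open SimpleGraph

variable {V : Type*} {W : Type*}

/-- The direct (tensor) product of two simple graphs. -/
def tensorProd (G : SimpleGraph V) (H : SimpleGraph W) : SimpleGraph (V × W) where
  Adj a b := G.Adj a.1 b.1 ∧ H.Adj a.2 b.2
  symm := ⟨fun _ _ h => ⟨G.adj_symm h.1, H.adj_symm h.2⟩⟩
  loopless := ⟨fun _ h => G.irrefl h.1⟩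

instance tensorProd.adjDecidable (G : SimpleGraph V) (H : SimpleGraph W)
    [DecidableRel G.Adj] [DecidableRel H.Adj] : DecidableRel (tensorProd G H).Adj :=
  fun a b => (instDecidableAnd : Decidable (G.Adj a.1 b.1 ∧ H.Adj a.2 b.2))

/-- A proper edge colouring with `n` colours, given as a symmetric function on adjacent pairs. -/
def IsEdgeColoring (G : SimpleGraph V) (n : ℕ) (ce : V → V → Fin n) : Prop :=
  (∀ u v, G.Adj u v → ce u v = ce v u) ∧
  (∀ u v w, G.Adj u v → G.Adj u w → v ≠ w → ce u v ≠ ce u w)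

/-- A proper total colouring with `n` colours. -/
def IsTotalColoring (G : SimpleGraph V) (n : ℕ) (cv : V → Fin n) (ce : V → V → Fin n) : Prop :=
  (∀ u v, G.Adj u v → ce u v = ce v u) ∧
  (∀ u v, G.Adj u v → cv u ≠ cv v) ∧
  (∀ u v w, G.Adj u v → G.Adj u w → v ≠ w → ce u v ≠ ce u w) ∧
  (∀ u v, G.Adj u v → ce u v ≠ cv u ∧ ce u v ≠ cv v)

/-- The total chromatic number of a graph. -/
noncomputable def totalChromaticNumber (G : SimpleGraph V) : ℕ :=
  sInf {n | ∃ cv ce, IsTotalColoring G n cv ce}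

/-- Adjacency of the crown graph. -/
def crownAdj {m : ℕ} : Fin m ⊕ Fin m → Fin m ⊕ Fin m → Prop
  | Sum.inl k, Sum.inr t => k ≠ t
  | Sum.inr k, Sum.inl t => k ≠ t
  | _, _ => False

/-- The crown graph `J_{2m}`: `K_{m,m}` minus a perfect matching. -/
def crown (m : ℕ) : SimpleGraph (Fin m ⊕ Fin m) where
  Adj := crownAdj
  symm := ⟨by rintro (k|k) (t|t) h <;> simp only [crownAdj] at * <;> exact fun e => h e.symm⟩
  loopless := ⟨by rintro (k|k) h <;> simp only [crownAdj] at h⟩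

instance crown.adjDecidable (m : ℕ) : DecidableRel (crown m).Adj := fun a b =>
  match a, b with
  | Sum.inl k, Sum.inr t => (inferInstance : Decidable (k ≠ t))
  | Sum.inr k, Sum.inl t => (inferInstance : Decidable (k ≠ t))
  | Sum.inl _, Sum.inl _ => isFalse (fun h => h)
  | Sum.inr _, Sum.inr _ => isFalse (fun h => h)

section KonigAux

variable {W : Type*} [Fintype W] [DecidableEq W]

open Finset

/-- Transportation padding: any pair of demand vectors with equal sums is realized
by a nonnegative integer matrix. -/
lemma exists_fill : ∀ (N : ℕ) (r c : W → ℕ), (∑ i, r i = N) → (∑ j, c j = N) →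
    ∃ D : W → W → ℕ, (∀ i, ∑ j, D i j = r i) ∧ (∀ j, ∑ i, D i j = c j) := by
  intro N
  induction N with
  | zero =>
    intro r c hr hc
    refine ⟨fun _ _ => 0, ?_, ?_⟩ <;> intro i <;> simp
    · exact ((Finset.sum_eq_zero_iff.mp hr) i (mem_univ i)).symm
    · exact ((Finset.sum_eq_zero_iff.mp hc) i (mem_univ i)).symm
  | succ N ih =>
    intro r c hr hc
    have hrpos : ∃ i, 0 < r i := by
      by_contra h
      push_neg at h
      simp only [Nat.le_zero] at h
      rw [Finset.sum_eq_zero (fun i _ => h i)] at hr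
      omega
    have hcpos : ∃ j, 0 < c j := by
      by_contra h
      push_neg at h
      simp only [Nat.le_zero] at h
      rw [Finset.sum_eq_zero (fun i _ => h i)] at hc
      omega
    obtain ⟨i0, hi0⟩ := hrpos
    obtain ⟨j0, hj0⟩ := hcpos
    have hr' : ∑ i, Function.update r i0 (r i0 - 1) i = N := by
      rw [Finset.sum_update_of_mem (mem_univ i0), Finset.sdiff_singleton_eq_erase]
      rw [← Finset.sum_erase_add _ _ (mem_univ i0)] at hr
      omega
    have hc' : ∑ j, Function.update c j0 (c j0 - 1) j = N := by
      rw [Finset.sum_update_of_mem (mem_univ j0), Finset.sdiff_singleton_eq_erase]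
      rw [← Finset.sum_erase_add _ _ (mem_univ j0)] at hc
      omega
    obtain ⟨D, hD1, hD2⟩ := ih (Function.update r i0 (r i0 - 1))
      (Function.update c j0 (c j0 - 1)) hr' hc'
    refine ⟨fun i j => D i j + (if i = i0 ∧ j = j0 then 1 else 0), ?_, ?_⟩
    · intro i
      rw [Finset.sum_add_distrib, hD1]
      by_cases h : i = i0
      · subst h
        simp only [true_and]
        rw [Finset.sum_ite_eq' univ j0 (fun _ => 1)]
        simp only [mem_univ, if_true, Function.update_self]
        omega
      · simp only [h, false_and, if_false, Finset.sum_const_zero, add_zero]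
        rw [Function.update_of_ne h]
    · intro j
      rw [Finset.sum_add_distrib, hD2]
      by_cases h : j = j0
      · subst h
        simp only [and_true]
        rw [Finset.sum_ite_eq' univ i0 (fun _ => 1)]
        simp only [mem_univ, if_true, Function.update_self]
        omega
      · simp only [h, and_false, if_false, Finset.sum_const_zero, add_zero]
        rw [Function.update_of_ne h]

lemma exists_perm_of_regular (k : ℕ) (hk : 0 < k) (M : W → W → ℕ)
    (hrow : ∀ i, ∑ j, M i j = k) (hcol : ∀ j, ∑ i, M i j = k) :
    ∃ σ : W → W, Function.Bijective σ ∧ ∀ i, 0 < M i (σ i) := by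
  classical
  have key : ∀ s : Finset W,
      s.card ≤ (s.biUnion (fun i => univ.filter (fun j => 0 < M i j))).card := by
    intro s
    set B := s.biUnion (fun i => univ.filter (fun j => 0 < M i j)) with hB
    have h1 : ∀ i ∈ s, ∑ j ∈ B, M i j = k := by
      intro i hi
      rw [Finset.sum_subset (Finset.subset_univ B), hrow]
      intro j _ hj
      by_contra hne
      exact hj (Finset.mem_biUnion.mpr ⟨i, hi, Finset.mem_filter.mpr
        ⟨mem_univ j, Nat.pos_of_ne_zero hne⟩⟩)
    have h2 : k * s.card ≤ k * B.card := by
      calc k * s.card = ∑ i ∈ s, k := by rw [Finset.sum_const, smul_eq_mul, mul_comm]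
        _ = ∑ i ∈ s, ∑ j ∈ B, M i j := Finset.sum_congr rfl (fun i hi => (h1 i hi).symm)
        _ = ∑ j ∈ B, ∑ i ∈ s, M i j := Finset.sum_comm
        _ ≤ ∑ j ∈ B, ∑ i, M i j := Finset.sum_le_sum (fun j _ =>
              Finset.sum_le_sum_of_subset (Finset.subset_univ s))
        _ = ∑ j ∈ B, k := Finset.sum_congr rfl (fun j _ => hcol j)
        _ = k * B.card := by rw [Finset.sum_const, smul_eq_mul, mul_comm]
    exact Nat.le_of_mul_le_mul_left h2 hk
  obtain ⟨f, hfinj, hf⟩ :=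
    (Finset.all_card_le_biUnion_card_iff_exists_injective
      (fun i => univ.filter (fun j => 0 < M i j))).mp key
  exact ⟨f, Finite.injective_iff_bijective.mp hfinj,
    fun i => (Finset.mem_filter.mp (hf i)).2⟩

lemma exists_edge_coloring_matrix : ∀ (k : ℕ) (M : W → W → ℕ),
    (∀ i, ∑ j, M i j = k) → (∀ j, ∑ i, M i j = k) →
    ∃ f : W → W → ℕ, (∀ i j, 0 < M i j → f i j < k) ∧
      (∀ i j j', 0 < M i j → 0 < M i j' → j ≠ j' → f i j ≠ f i j') ∧
      (∀ i i' j, 0 < M i j → 0 < M i' j → i ≠ i' → f i j ≠ f i' j) := by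
  intro k
  induction k with
  | zero =>
    intro M hrow hcol
    refine ⟨fun _ _ => 0, fun i j h => ?_, fun i j j' h => ?_, fun i i' j h => ?_⟩ <;>
    · exfalso
      have := Finset.sum_eq_zero_iff.mp (hrow i) j (mem_univ j)
      omega
  | succ k ih =>
    intro M hrow hcol
    obtain ⟨σ, hσb, hσ⟩ := exists_perm_of_regular (k+1) (by omega) M hrow hcol
    set e := Equiv.ofBijective σ hσb with he
    set M' := fun i j => M i j - (if j = σ i then 1 else 0) with hM'
    have hrow' : ∀ i, ∑ j, M' i j = k := by
      intro i
      have d1 : ∑ j, M' i j = M' i (σ i) + ∑ j ∈ univ.erase (σ i), M' i j :=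
        (Finset.add_sum_erase _ _ (mem_univ _)).symm
      have d2 : ∑ j, M i j = M i (σ i) + ∑ j ∈ univ.erase (σ i), M i j :=
        (Finset.add_sum_erase _ _ (mem_univ _)).symm
      have d3 : ∑ j ∈ univ.erase (σ i), M' i j = ∑ j ∈ univ.erase (σ i), M i j := by
        refine Finset.sum_congr rfl (fun j hj => ?_)
        have : j ≠ σ i := (Finset.mem_erase.mp hj).1
        simp [hM', this]
      have d4 : M' i (σ i) = M i (σ i) - 1 := by simp [hM']
      have := hrow i
      have := hσ i
      omega
    have hcol' : ∀ j, ∑ i, M' i j = k := by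
      intro j
      have hj : σ (e.symm j) = j := e.apply_symm_apply j
      have d1 : ∑ i, M' i j = M' (e.symm j) j + ∑ i ∈ univ.erase (e.symm j), M' i j :=
        (Finset.add_sum_erase _ _ (mem_univ _)).symm
      have d2 : ∑ i, M i j = M (e.symm j) j + ∑ i ∈ univ.erase (e.symm j), M i j :=
        (Finset.add_sum_erase _ _ (mem_univ _)).symm
      have d3 : ∑ i ∈ univ.erase (e.symm j), M' i j = ∑ i ∈ univ.erase (e.symm j), M i j := by
        refine Finset.sum_congr rfl (fun i hi => ?_)
        have hne : i ≠ e.symm j := (Finset.mem_erase.mp hi).1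
        have : j ≠ σ i := fun hc => hne (hσb.1 (by rw [hj, ← hc]))
        simp [hM', this]
      have d4 : M' (e.symm j) j = M (e.symm j) j - 1 := by simp [hM', hj]
      have h5 := hσ (e.symm j)
      rw [hj] at h5
      have := hcol j
      omega
    obtain ⟨f, h1, h2, h3⟩ := ih M' hrow' hcol'
    refine ⟨fun i j => if j = σ i then k else f i j, ?_, ?_, ?_⟩
    · intro i j hij
      by_cases h : j = σ i
      · simp [h]
      · have : 0 < M' i j := by simp [hM', h]; omega
        have := h1 i j this
        simp [h]
        omega
    · intro i j j' hj hj' hne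
      by_cases h : j = σ i <;> by_cases h' : j' = σ i
      · exact absurd (h.trans h'.symm) hne
      · have : 0 < M' i j' := by simp [hM', h']; omega
        have := h1 i j' this
        dsimp only
        rw [if_pos h, if_neg h']
        omega
      · have : 0 < M' i j := by simp [hM', h]; omega
        have := h1 i j this
        dsimp only
        rw [if_neg h, if_pos h']
        omega
      · have p : 0 < M' i j := by simp [hM', h]; omega
        have p' : 0 < M' i j' := by simp [hM', h']; omega
        dsimp only
        rw [if_neg h, if_neg h']
        exact h2 i j j' p p' hne
    · intro i i' j hj hj' hne
      by_cases h : j = σ i <;> by_cases h' : j = σ i'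
      · exact absurd (hσb.1 (h.symm.trans h')) hne
      · have : 0 < M' i' j := by simp [hM', h']; omega
        have := h1 i' j this
        dsimp only
        rw [if_pos h, if_neg h']
        omega
      · have : 0 < M' i j := by simp [hM', h]; omega
        have := h1 i j this
        dsimp only
        rw [if_neg h, if_pos h']
        omega
      · have p : 0 < M' i j := by simp [hM', h]; omega
        have p' : 0 < M' i' j := by simp [hM', h']; omega
        dsimp only
        rw [if_neg h, if_neg h']
        exact h3 i i' j p p' hne

end KonigAux

/-- value of the Latin square for even side `k+1` -/
def eS (k a b : ℕ) : ℕ :=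
  if a = k then (if b = k then k else ((2 * (b + 1) : ℕ) : ZMod k).val)
  else if b = k then ((2 * a : ℕ) : ZMod k).val
  else if ((b + 1 : ℕ) : ZMod k) = (a : ZMod k) then k
  else ((a + b + 1 : ℕ) : ZMod k).val

lemma exists_diag_latin (n : ℕ) (hn : 3 ≤ n) :
    ∃ S : Fin n → Fin n → ℕ, (∀ i j, S i j < n) ∧
      (∀ (i : Fin n), Function.Injective (S i)) ∧
      (∀ (j : Fin n), Function.Injective (fun i => S i j)) ∧
      Function.Injective (fun (i : Fin n) => S i i) := by
  haveI : NeZero n := ⟨by omega⟩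
  rcases Nat.even_or_odd n with heven | hodd
  · -- n even, use eS with k = n - 1 (odd, ≥ 3)
    set k := n - 1 with hkdef
    have hk3 : 3 ≤ k := by
      rcases heven with ⟨m, hm⟩; omega
    have hkodd : Odd k := by
      rcases heven with ⟨m, hm⟩
      exact ⟨m - 1, by omega⟩
    haveI : NeZero k := ⟨by omega⟩
    have hvlt : ∀ a : ℕ, ((a : ZMod k)).val < k := fun a => ZMod.val_lt _
    have castinj : ∀ a b : ℕ, a < k → b < k → (a : ZMod k) = (b : ZMod k) → a = b := by
      intro a b ha hb h
      have := ZMod.val_cast_of_lt ha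
      have := ZMod.val_cast_of_lt hb
      rw [h] at *
      omega
    have two_unit : IsUnit (2 : ZMod k) := by
      have h2 : Nat.Coprime 2 k := Nat.coprime_two_left.mpr hkodd
      have := (ZMod.isUnit_iff_coprime 2 k).mpr h2
      simpa using this
    have two_cancel : ∀ x y : ZMod k, 2 * x = 2 * y → x = y := by
      intro x y h
      exact two_unit.mul_right_injective h
    have valinj : ∀ x y : ZMod k, x.val = y.val → x = y := by
      intro x y h
      exact ZMod.val_injective _ h
    have castinj1 : ∀ a b : ℕ, a < k → b < k →
        ((a + 1 : ℕ) : ZMod k) = ((b + 1 : ℕ) : ZMod k) → a = b := by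
      intro a b ha hb h
      have hv := congrArg ZMod.val h
      by_cases h1 : a + 1 = k <;> by_cases h2 : b + 1 = k
      · omega
      · rw [h1, ZMod.natCast_self, ZMod.val_zero,
          ZMod.val_cast_of_lt (show b + 1 < k by omega)] at hv
        omega
      · rw [h2, ZMod.natCast_self, ZMod.val_zero,
          ZMod.val_cast_of_lt (show a + 1 < k by omega)] at hv
        omega
      · rw [ZMod.val_cast_of_lt (show a + 1 < k by omega),
          ZMod.val_cast_of_lt (show b + 1 < k by omega)] at hv
        omega
    refine ⟨fun i j => eS k i.val j.val, ?_, ?_, ?_, ?_⟩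
    · intro i j
      unfold eS
      dsimp only
      have h1 := hvlt (2 * (j.val + 1))
      have h2 := hvlt (2 * i.val)
      have h3 := hvlt (i.val + j.val + 1)
      split_ifs <;> omega
    · -- rows
      intro i b b' hbb
      apply Fin.val_injective
      have hb : b.val ≤ k := by have := b.isLt; omega
      have hb' : b'.val ≤ k := by have := b'.isLt; omega
      have ha : i.val ≤ k := by have := i.isLt; omega
      unfold eS at hbb
      dsimp only at hbb
      by_cases hik : i.val = k
      · rw [if_pos hik, if_pos hik] at hbb
        by_cases h1 : b.val = k <;> by_cases h2 : b'.val = k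
        · omega
        · rw [if_pos h1, if_neg h2] at hbb
          exact absurd hbb.symm (Nat.ne_of_lt (hvlt _))
        · rw [if_neg h1, if_pos h2] at hbb
          exact absurd hbb (Nat.ne_of_lt (hvlt _))
        · rw [if_neg h1, if_neg h2] at hbb
          have := valinj _ _ hbb
          push_cast at this
          have := two_cancel _ _ this
          have : ((b.val : ZMod k)) = (b'.val : ZMod k) := by
            have h' := this
            exact add_right_cancel h'
          exact castinj _ _ (by omega) (by omega) this
      · rw [if_neg hik, if_neg hik] at hbb
        have hika : i.val < k := by omega
        by_cases h1 : b.val = k <;> by_cases h2 : b'.val = k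
        · omega
        · rw [if_pos h1] at hbb
          rw [if_neg h2] at hbb
          by_cases h3 : ((b'.val + 1 : ℕ) : ZMod k) = (i.val : ZMod k)
          · rw [if_pos h3] at hbb
            exact absurd hbb (Nat.ne_of_lt (hvlt _))
          · rw [if_neg h3] at hbb
            have := valinj _ _ hbb
            push_cast at this
            -- 2 * a = a + b' + 1 → a = b' + 1
            exfalso
            apply h3
            push_cast
            have : (i.val : ZMod k) = (b'.val : ZMod k) + 1 := by
              have h2a : (2 : ZMod k) * (i.val : ZMod k) = (i.val : ZMod k) + (i.val : ZMod k) := by ring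
              rw [h2a] at this
              linear_combination this
            linear_combination this.symm
        · rw [if_neg h1, if_pos h2] at hbb
          by_cases h3 : ((b.val + 1 : ℕ) : ZMod k) = (i.val : ZMod k)
          · rw [if_pos h3] at hbb
            exact absurd hbb.symm (Nat.ne_of_lt (hvlt _))
          · rw [if_neg h3] at hbb
            have := valinj _ _ hbb
            push_cast at this
            exfalso
            apply h3
            push_cast
            linear_combination this
        · rw [if_neg h1, if_neg h2] at hbb
          by_cases h3 : ((b.val + 1 : ℕ) : ZMod k) = (i.val : ZMod k) <;>
            by_cases h4 : ((b'.val + 1 : ℕ) : ZMod k) = (i.val : ZMod k)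
          · rw [if_pos h3, if_pos h4] at hbb
            have : ((b.val + 1 : ℕ) : ZMod k) = ((b'.val + 1 : ℕ) : ZMod k) := by rw [h3, h4]
            exact castinj1 _ _ (by omega) (by omega) this
          · rw [if_pos h3, if_neg h4] at hbb
            exact absurd hbb.symm (Nat.ne_of_lt (hvlt _))
          · rw [if_neg h3, if_pos h4] at hbb
            exact absurd hbb (Nat.ne_of_lt (hvlt _))
          · rw [if_neg h3, if_neg h4] at hbb
            have := valinj _ _ hbb
            push_cast at this
            have : (b.val : ZMod k) = (b'.val : ZMod k) := by linear_combination this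
            exact castinj _ _ (by omega) (by omega) this
    · -- columns
      intro b i i' hii
      apply Fin.val_injective
      have hb : b.val ≤ k := by have := b.isLt; omega
      have ha : i.val ≤ k := by have := i.isLt; omega
      have ha' : i'.val ≤ k := by have := i'.isLt; omega
      unfold eS at hii
      dsimp only at hii
      by_cases h1 : i.val = k <;> by_cases h2 : i'.val = k
      · omega
      · rw [if_pos h1, if_neg h2] at hii
        by_cases hbk : b.val = k
        · rw [if_pos hbk, if_pos hbk] at hii
          exact absurd hii.symm (Nat.ne_of_lt (hvlt _))
        · rw [if_neg hbk, if_neg hbk] at hii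
          by_cases h3 : ((b.val + 1 : ℕ) : ZMod k) = (i'.val : ZMod k)
          · rw [if_pos h3] at hii
            exact absurd hii (Nat.ne_of_lt (hvlt _))
          · rw [if_neg h3] at hii
            have := valinj _ _ hii
            push_cast at this
            exfalso
            apply h3
            push_cast
            linear_combination this
      · rw [if_neg h1, if_pos h2] at hii
        by_cases hbk : b.val = k
        · rw [if_pos hbk, if_pos hbk] at hii
          exact absurd hii (Nat.ne_of_lt (hvlt _))
        · rw [if_neg hbk, if_neg hbk] at hii
          by_cases h3 : ((b.val + 1 : ℕ) : ZMod k) = (i.val : ZMod k)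
          · rw [if_pos h3] at hii
            exact absurd hii.symm (Nat.ne_of_lt (hvlt _))
          · rw [if_neg h3] at hii
            have := valinj _ _ hii
            push_cast at this
            exfalso
            apply h3
            push_cast
            linear_combination -this
      · rw [if_neg h1, if_neg h2] at hii
        by_cases hbk : b.val = k
        · rw [if_pos hbk, if_pos hbk] at hii
          have := valinj _ _ hii
          push_cast at this
          have : (i.val : ZMod k) = (i'.val : ZMod k) := two_cancel _ _ this
          exact castinj _ _ (by omega) (by omega) this
        · rw [if_neg hbk, if_neg hbk] at hii
          by_cases h3 : ((b.val + 1 : ℕ) : ZMod k) = (i.val : ZMod k) <;>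
            by_cases h4 : ((b.val + 1 : ℕ) : ZMod k) = (i'.val : ZMod k)
          · rw [if_pos h3, if_pos h4] at hii
            exact castinj _ _ (by omega) (by omega) (h3 ▸ h4)
          · rw [if_pos h3, if_neg h4] at hii
            exact absurd hii.symm (Nat.ne_of_lt (hvlt _))
          · rw [if_neg h3, if_pos h4] at hii
            exact absurd hii (Nat.ne_of_lt (hvlt _))
          · rw [if_neg h3, if_neg h4] at hii
            have := valinj _ _ hii
            push_cast at this
            have : (i.val : ZMod k) = (i'.val : ZMod k) := by linear_combination this
            exact castinj _ _ (by omega) (by omega) this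
    · -- diagonal
      intro i i' hii
      apply Fin.val_injective
      have ha : i.val ≤ k := by have := i.isLt; omega
      have ha' : i'.val ≤ k := by have := i'.isLt; omega
      unfold eS at hii
      dsimp only at hii
      have hone : (1 : ZMod k) ≠ 0 := by
        have hv := ZMod.val_cast_of_lt (show (1 : ℕ) < k by omega)
        intro h
        rw [Nat.cast_one, h, ZMod.val_zero] at hv
        omega
      have hsp : ∀ a : ℕ, a < k → ((a + 1 : ℕ) : ZMod k) ≠ (a : ZMod k) := by
        intro a halt h
        push_cast at h
        apply hone
        linear_combination h
      by_cases h1 : i.val = k <;> by_cases h2 : i'.val = k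
      · omega
      · rw [if_pos h1] at hii
        rw [if_pos h1] at hii
        rw [if_neg h2] at hii
        rw [if_neg h2] at hii
        rw [if_neg (hsp i'.val (by omega))] at hii
        exact absurd hii.symm (Nat.ne_of_lt (hvlt _))
      · rw [if_neg h1, if_neg h1, if_neg (hsp i.val (by omega)), if_pos h2, if_pos h2] at hii
        exact absurd hii (Nat.ne_of_lt (hvlt _))
      · rw [if_neg h1, if_neg h1, if_neg h2, if_neg h2,
          if_neg (hsp i.val (by omega)), if_neg (hsp i'.val (by omega))] at hii
        have := valinj _ _ hii
        push_cast at this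
        have : (i.val : ZMod k) = (i'.val : ZMod k) := by
          apply two_cancel
          linear_combination this
        exact castinj _ _ (by omega) (by omega) this
  · -- n odd : S i j = (i + j) mod n
    have hvlt : ∀ a : ℕ, ((a : ZMod n)).val < n := fun a => ZMod.val_lt _
    have castinj : ∀ a b : ℕ, a < n → b < n → (a : ZMod n) = (b : ZMod n) → a = b := by
      intro a b ha hb h
      have := ZMod.val_cast_of_lt ha
      have := ZMod.val_cast_of_lt hb
      rw [h] at *
      omega
    have two_unit : IsUnit (2 : ZMod n) := by
      have h2 : Nat.Coprime 2 n := Nat.coprime_two_left.mpr hodd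
      have := (ZMod.isUnit_iff_coprime 2 n).mpr h2
      simpa using this
    refine ⟨fun i j => ((i.val + j.val : ℕ) : ZMod n).val, fun i j => hvlt _, ?_, ?_, ?_⟩
    · intro i b b' hbb
      apply Fin.val_injective
      have := ZMod.val_injective (n := n) hbb
      push_cast at this
      have : (b.val : ZMod n) = (b'.val : ZMod n) := by linear_combination this
      exact castinj _ _ b.isLt b'.isLt this
    · intro j i i' hii
      apply Fin.val_injective
      simp only at hii
      have := ZMod.val_injective (n := n) hii
      push_cast at this
      have : (i.val : ZMod n) = (i'.val : ZMod n) := by linear_combination this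
      exact castinj _ _ i.isLt i'.isLt this
    · intro i i' hii
      apply Fin.val_injective
      simp only at hii
      have := ZMod.val_injective (n := n) hii
      push_cast at this
      have : (i.val : ZMod n) = (i'.val : ZMod n) := by
        apply two_unit.mul_right_injective
        push_cast
        linear_combination this
      exact castinj _ _ i.isLt i'.isLt this
theorem Kn_tensor_bipartite_typeI [Fintype W] (n : ℕ) (hn : 3 ≤ n) (H : SimpleGraph W)
    [DecidableRel H.Adj] (hH : H.Colorable 2) (hedge : ∃ x y, H.Adj x y) :
    totalChromaticNumber (tensorProd (⊤ : SimpleGraph (Fin n)) H) =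
      (n - 1) * H.maxDegree + 1 := by
  classical
  set G := tensorProd (⊤ : SimpleGraph (Fin n)) H with hG
  set Δ := H.maxDegree with hΔ
  set N := (n - 1) * Δ + 1 with hN
  -- basic adjacency description
  have hadj : ∀ u v : Fin n × W, G.Adj u v ↔ u.1 ≠ v.1 ∧ H.Adj u.2 v.2 := by
    intro u v
    constructor
    · intro h; rw [hG] at h; obtain ⟨h1, h2⟩ := h; exact ⟨by simpa using h1, h2⟩
    · rintro ⟨h1, h2⟩; rw [hG]; exact ⟨by simpa using h1, h2⟩
  -- Δ ≥ 1
  obtain ⟨x0, y0, hx0y0⟩ := hedge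
  have hΔ1 : 1 ≤ Δ := by
    have h1 : 0 < H.degree x0 := by
      rw [H.degree_pos_iff_exists_adj]
      exact ⟨y0, hx0y0⟩
    have := H.degree_le_maxDegree x0
    omega
  have hnN : n ≤ N := by
    have : (n-1) * 1 ≤ (n-1) * Δ := Nat.mul_le_mul_left _ hΔ1
    omega
  -- bipartition
  obtain ⟨c⟩ := hH
  have hcne : ∀ {w w' : W}, H.Adj w w' → c w ≠ c w' := fun h => c.valid h
  have hctwo : ∀ x : Fin 2, x = 0 ∨ x = 1 := by decide
  have hAB : ∀ {w w' : W}, H.Adj w w' → c w ≠ 0 → (c w = 1 ∧ c w' = 0) := by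
    intro w w' h hw
    have h1 := hcne h
    rcases hctwo (c w) with h2 | h2 <;> rcases hctwo (c w') with h3 | h3 <;> simp_all
  have hBA : ∀ {w w' : W}, H.Adj w w' → c w = 0 → c w' = 1 := by
    intro w w' h hw
    have h1 := hcne h
    rcases hctwo (c w') with h3 | h3 <;> simp_all
  -- the matrix M₀ and its regularization
  set M₀ : W → W → ℕ := fun w w' => if c w = 0 ∧ H.Adj w w' then 1 else 0 with hM₀
  have hrowsum : ∀ w, ∑ w', M₀ w w' = if c w = 0 then H.degree w else 0 := by
    intro w
    by_cases hw : c w = 0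
    · rw [if_pos hw]
      have : ∀ w', M₀ w w' = if H.Adj w w' then 1 else 0 := by
        intro w'; simp only [hM₀, hw, true_and]
      rw [Finset.sum_congr rfl (fun w' _ => this w'), Finset.sum_boole]
      rw [SimpleGraph.degree, SimpleGraph.neighborFinset_eq_filter]
      simp
    · rw [if_neg hw]
      apply Finset.sum_eq_zero
      intro w' _
      simp only [hM₀, hw, false_and, if_false]
  have hcolsum : ∀ w', ∑ w, M₀ w w' = if c w' = 1 then H.degree w' else 0 := by
    intro w'
    by_cases hw : c w' = 1
    · rw [if_pos hw]
      have : ∀ w, M₀ w w' = if H.Adj w' w then 1 else 0 := by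
        intro w
        simp only [hM₀]
        by_cases ha : H.Adj w' w
        · have hcw : c w = 0 := by
            have h1 := hcne ha.symm
            rcases hctwo (c w) with h2 | h2
            · exact h2
            · exact absurd (h2.trans hw.symm) h1
          rw [if_pos ha, if_pos ⟨hcw, ha.symm⟩]
        · rw [if_neg ha, if_neg]
          rintro ⟨-, h2⟩
          exact ha h2.symm
      rw [Finset.sum_congr rfl (fun w _ => this w), Finset.sum_boole]
      rw [SimpleGraph.degree, SimpleGraph.neighborFinset_eq_filter]
      simp
    · rw [if_neg hw]
      apply Finset.sum_eq_zero
      intro w _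
      simp only [hM₀]
      rw [if_neg]
      rintro ⟨h1, h2⟩
      exact hw (hBA h2 h1)
  have hrowle : ∀ w, ∑ w', M₀ w w' ≤ Δ := by
    intro w
    rw [hrowsum w]
    split_ifs
    · exact H.degree_le_maxDegree w
    · omega
  have hcolle : ∀ w', ∑ w, M₀ w w' ≤ Δ := by
    intro w'
    rw [hcolsum w']
    split_ifs
    · exact H.degree_le_maxDegree w'
    · omega
  have hsumcomm : ∑ w, ∑ w', M₀ w w' = ∑ w', ∑ w, M₀ w w' := Finset.sum_comm
  have hfillsum : ∑ w, (Δ - ∑ w', M₀ w w') = ∑ w', (Δ - ∑ w, M₀ w w') := by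
    have key : ∀ (R : W → ℕ), (∀ w, R w ≤ Δ) →
        ((∑ w, (Δ - R w) : ℕ) : ℤ) = (Finset.univ.card (α := W) : ℤ) * Δ - ∑ w, (R w : ℤ) := by
      intro R hR
      rw [Nat.cast_sum]
      rw [Finset.sum_congr rfl (fun w _ => (Nat.cast_sub (hR w) :
        ((Δ - R w : ℕ) : ℤ) = _))]
      rw [Finset.sum_sub_distrib, Finset.sum_const, nsmul_eq_mul]
    have e1 := key (fun w => ∑ w', M₀ w w') hrowle
    have e2 := key (fun w' => ∑ w, M₀ w w') hcolle
    have e3 : (∑ w, ((∑ w', M₀ w w' : ℕ) : ℤ)) = ∑ w', ((∑ w, M₀ w w' : ℕ) : ℤ) := by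
      push_cast
      exact_mod_cast hsumcomm
    have e4 := e1.trans (by rw [e3, ← e2])
    exact_mod_cast e4
  obtain ⟨D, hD1, hD2⟩ := exists_fill (∑ w, (Δ - ∑ w', M₀ w w'))
    (fun w => Δ - ∑ w', M₀ w w') (fun w' => Δ - ∑ w, M₀ w w') rfl hfillsum.symm
  set M : W → W → ℕ := fun w w' => M₀ w w' + D w w' with hM
  have hMrow : ∀ w, ∑ w', M w w' = Δ := by
    intro w
    simp only [hM]
    rw [Finset.sum_add_distrib, hD1 w]
    have := hrowle w
    omega
  have hMcol : ∀ w', ∑ w, M w w' = Δ := by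
    intro w'
    simp only [hM]
    rw [Finset.sum_add_distrib, hD2 w']
    have := hcolle w'
    omega
  obtain ⟨f, hf1, hf2, hf3⟩ := exists_edge_coloring_matrix Δ M hMrow hMcol
  have hMpos : ∀ {w w' : W}, c w = 0 → H.Adj w w' → 0 < M w w' := by
    intro w w' h1 h2
    simp only [hM, hM₀, h1, h2, and_self, if_true]
    omega
  -- the diagonal Latin square
  obtain ⟨S, hSlt, hSrow, hScol, hSdiag⟩ := exists_diag_latin n hn
  -- the Kn difference function
  set dd : Fin n → Fin n → ℕ :=
    fun a b => if a.val < b.val then b.val - a.val else n - (a.val - b.val) with hdd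
  have hddlb : ∀ a b : Fin n, a ≠ b → 1 ≤ dd a b ∧ dd a b ≤ n - 1 := by
    intro a b hab
    have h1 : a.val ≠ b.val := fun h => hab (Fin.val_injective h)
    have h2 := a.isLt
    have h3 := b.isLt
    simp only [hdd]
    split_ifs <;> omega
  have hddinj1 : ∀ (a b b' : Fin n), a ≠ b → a ≠ b' → dd a b = dd a b' → b = b' := by
    intro a b b' h1 h2 h3
    have g1 : a.val ≠ b.val := fun h => h1 (Fin.val_injective h)
    have g2 : a.val ≠ b'.val := fun h => h2 (Fin.val_injective h)
    have l1 := a.isLt; have l2 := b.isLt; have l3 := b'.isLt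
    apply Fin.val_injective
    simp only [hdd] at h3
    split_ifs at h3 <;> omega
  have hddinj2 : ∀ (b a a' : Fin n), a ≠ b → a' ≠ b → dd a b = dd a' b → a = a' := by
    intro b a a' h1 h2 h3
    have g1 : a.val ≠ b.val := fun h => h1 (Fin.val_injective h)
    have g2 : a'.val ≠ b.val := fun h => h2 (Fin.val_injective h)
    have l1 := a.isLt; have l2 := a'.isLt; have l3 := b.isLt
    apply Fin.val_injective
    simp only [hdd] at h3
    split_ifs at h3 <;> omega
  -- block disjointness
  have hmulmono : ∀ x y : ℕ, 1 ≤ x → x < y → x * (n-1) ≤ (y-1) * (n-1) :=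
    fun x y _ h2 => Nat.mul_le_mul_right _ (by omega)
  have hblock : ∀ x y d1 d2 : ℕ, 1 ≤ x → x < y → 1 ≤ d1 → d1 ≤ n-1 → 1 ≤ d2 → d2 ≤ n-1 →
      n + (x-1)*(n-1) + (d1-1) ≠ n + (y-1)*(n-1) + (d2-1) := by
    intro x y d1 d2 hx hxy hd1 hd1' hd2 hd2'
    have h2 := hmulmono x y hx hxy
    have hx' : x * (n-1) = (x-1)*(n-1) + (n-1) := by
      obtain ⟨x', rfl⟩ : ∃ x', x = x' + 1 := ⟨x-1, by omega⟩
      rw [Nat.succ_mul, Nat.add_sub_cancel]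
    omega
  -- value of an oriented edge (u on the 0 side)
  set FV : (Fin n × W) → (Fin n × W) → ℕ := fun u v =>
    if f u.2 v.2 = 0 then S u.1 v.1
    else n + (f u.2 v.2 - 1) * (n-1) + (dd u.1 v.1 - 1) with hFV
  have hFVlt : ∀ u v : Fin n × W, u.1 ≠ v.1 → c u.2 = 0 → H.Adj u.2 v.2 → FV u v < N := by
    intro u v h1 h2 h3
    have hfΔ := hf1 _ _ (hMpos h2 h3)
    have hd := hddlb u.1 v.1 h1
    simp only [hFV]
    split_ifs with hf
    · have := hSlt u.1 v.1
      omega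
    · have h4 : (f u.2 v.2 - 1) * (n-1) ≤ (Δ - 1 - 1) * (n-1) :=
        Nat.mul_le_mul_right _ (by omega)
      have h5 : (n-1) * Δ = (Δ - 1 - 1) * (n-1) + 2 * (n-1) := by
        have hΔ2 : 2 ≤ Δ := by omega
        obtain ⟨d', hd'⟩ : ∃ d', Δ = d' + 2 := ⟨Δ - 2, by omega⟩
        rw [hd']
        have he : d' + 2 - 1 - 1 = d' := by omega
        rw [he]
        ring
      omega
  -- row injectivity of FV
  have hFrow : ∀ (i : Fin n) (w : W) (v v' : Fin n × W), c w = 0 →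
      i ≠ v.1 → i ≠ v'.1 → H.Adj w v.2 → H.Adj w v'.2 → v ≠ v' →
      FV (i, w) v ≠ FV (i, w) v' := by
    intro i w v v' hc h1 h1' h2 h2' hvv
    have hp := hMpos hc h2
    have hp' := hMpos hc h2'
    have hd := hddlb i v.1 h1
    have hd' := hddlb i v'.1 h1'
    simp only [hFV]
    by_cases hveq : v.2 = v'.2
    · have hj : v.1 ≠ v'.1 := by
        intro h
        exact hvv (Prod.ext h hveq)
      rw [hveq]
      split_ifs with hf
      · intro h
        exact hj (hSrow i (by exact_mod_cast h))
      · intro h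
        have : dd i v.1 = dd i v'.1 := by omega
        exact hj (hddinj1 i v.1 v'.1 h1 h1' this)
    · have hfne : f w v.2 ≠ f w v'.2 := hf2 w v.2 v'.2 hp hp' hveq
      split_ifs with g1 g2 g2
      · exact absurd (g1.trans g2.symm) hfne
      · have := hSlt i v.1
        omega
      · have := hSlt i v'.1
        omega
      · rcases Nat.lt_or_ge (f w v.2) (f w v'.2) with hlt | hge
        · exact hblock _ _ _ _ (by omega) hlt (hd.1) (hd.2) (hd'.1) (hd'.2)
        · have hgt : f w v'.2 < f w v.2 := by omega
          exact (hblock _ _ _ _ (by omega) hgt (hd'.1) (hd'.2) (hd.1) (hd.2)).symm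
  -- column injectivity of FV
  have hFcol : ∀ (j : Fin n) (w' : W) (u u' : Fin n × W), c w' = 1 →
      u.1 ≠ j → u'.1 ≠ j → H.Adj u.2 w' → H.Adj u'.2 w' → u ≠ u' →
      c u.2 = 0 → c u'.2 = 0 →
      FV u (j, w') ≠ FV u' (j, w') := by
    intro j w' u u' hc h1 h1' h2 h2' huu hcu hcu'
    have hp := hMpos hcu h2
    have hp' := hMpos hcu' h2'
    have hd := hddlb u.1 j h1
    have hd' := hddlb u'.1 j h1'
    simp only [hFV]
    by_cases hueq : u.2 = u'.2
    · have hj : u.1 ≠ u'.1 := by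
        intro h
        exact huu (Prod.ext h hueq)
      rw [hueq]
      split_ifs with hf
      · intro h
        exact hj (hScol j (by exact_mod_cast h))
      · intro h
        have : dd u.1 j = dd u'.1 j := by omega
        exact hj (hddinj2 j u.1 u'.1 h1 h1' this)
    · have hfne : f u.2 w' ≠ f u'.2 w' := hf3 u.2 u'.2 w' hp hp' hueq
      split_ifs with g1 g2 g2
      · exact absurd (g1.trans g2.symm) hfne
      · have := hSlt u.1 j
        omega
      · have := hSlt u'.1 j
        omega
      · rcases Nat.lt_or_ge (f u.2 w') (f u'.2 w') with hlt | hge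
        · exact hblock _ _ _ _ (by omega) hlt (hd.1) (hd.2) (hd'.1) (hd'.2)
        · have hgt : f u'.2 w' < f u.2 w' := by omega
          exact (hblock _ _ _ _ (by omega) hgt (hd'.1) (hd'.2) (hd.1) (hd.2)).symm
  -- FV avoids the diagonal values at its endpoints
  have hFdiag : ∀ u v : Fin n × W, u.1 ≠ v.1 → c u.2 = 0 → H.Adj u.2 v.2 →
      FV u v ≠ S u.1 u.1 ∧ FV u v ≠ S v.1 v.1 := by
    intro u v h1 h2 h3
    simp only [hFV]
    split_ifs with hf
    · constructor
      · intro h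
        exact h1 ((hSrow u.1 h).symm)
      · intro h
        exact h1 (hScol v.1 h)
    · have b1 := hSlt u.1 u.1
      have b2 := hSlt v.1 v.1
      constructor <;> omega
  -- the total coloring
  set cvF : Fin n × W → Fin N := fun p => ⟨S p.1 p.1, lt_of_lt_of_le (hSlt p.1 p.1) hnN⟩
    with hcvF
  set ceV : (Fin n × W) → (Fin n × W) → ℕ := fun u v =>
    if c u.2 = 0 then FV u v else FV v u with hceV
  have hceVlt : ∀ u v, G.Adj u v → ceV u v < N := by
    intro u v huv
    rw [hadj] at huv
    obtain ⟨h1, h2⟩ := huv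
    simp only [hceV]
    split_ifs with hc0
    · exact hFVlt u v h1 hc0 h2
    · obtain ⟨hu1, hv0⟩ := hAB h2 hc0
      exact hFVlt v u (Ne.symm h1) hv0 h2.symm
  set ceF : (Fin n × W) → (Fin n × W) → Fin N := fun u v =>
    if h : G.Adj u v then ⟨ceV u v, hceVlt u v h⟩ else ⟨0, by omega⟩ with hceF
  have hceVsym : ∀ u v, G.Adj u v → ceV u v = ceV v u := by
    intro u v huv
    rw [hadj] at huv
    obtain ⟨h1, h2⟩ := huv
    simp only [hceV]
    by_cases hc0 : c u.2 = 0
    · rw [if_pos hc0, if_neg]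
      have := hBA h2 hc0
      simp [this]
    · rw [if_neg hc0, if_pos (hAB h2 hc0).2]
  have hmem : N ∈ {m | ∃ cv ce, IsTotalColoring G m cv ce} := by
    refine ⟨cvF, ceF, ?_, ?_, ?_, ?_⟩
    · -- symmetry
      intro u v huv
      simp only [hceF, dif_pos huv, dif_pos huv.symm]
      exact Fin.val_injective (hceVsym u v huv)
    · -- vertex properness
      intro u v huv
      rw [hadj] at huv
      simp only [hcvF]
      intro h
      exact huv.1 (hSdiag (congrArg Fin.val h))
    · -- edge properness
      intro u v v' huv huv' hne
      simp only [hceF, dif_pos huv, dif_pos huv']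
      have h1 := (hadj u v).mp huv
      have h2 := (hadj u v').mp huv'
      intro h
      have hval : ceV u v = ceV u v' := congrArg Fin.val h
      simp only [hceV] at hval
      by_cases hc0 : c u.2 = 0
      · rw [if_pos hc0, if_pos hc0] at hval
        exact hFrow u.1 u.2 v v' hc0 h1.1 h2.1 h1.2 h2.2 hne hval
      · rw [if_neg hc0, if_neg hc0] at hval
        have hv0 := (hAB h1.2 hc0).2
        have hv0' := (hAB h2.2 hc0).2
        exact hFcol u.1 u.2 v v' (hAB h1.2 hc0).1 (Ne.symm h1.1) (Ne.symm h2.1)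
          h1.2.symm h2.2.symm hne hv0 hv0' hval
    · -- edge vs vertex
      intro u v huv
      have h1 := (hadj u v).mp huv
      simp only [hceF, dif_pos huv, hcvF]
      constructor
      · intro h
        have hval : ceV u v = S u.1 u.1 := congrArg Fin.val h
        simp only [hceV] at hval
        by_cases hc0 : c u.2 = 0
        · rw [if_pos hc0] at hval
          exact (hFdiag u v h1.1 hc0 h1.2).1 hval
        · rw [if_neg hc0] at hval
          exact (hFdiag v u (Ne.symm h1.1) (hAB h1.2 hc0).2 h1.2.symm).2 hval
      · intro h
        have hval : ceV u v = S v.1 v.1 := congrArg Fin.val h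
        simp only [hceV] at hval
        by_cases hc0 : c u.2 = 0
        · rw [if_pos hc0] at hval
          exact (hFdiag u v h1.1 hc0 h1.2).2 hval
        · rw [if_neg hc0] at hval
          exact (hFdiag v u (Ne.symm h1.1) (hAB h1.2 hc0).2 h1.2.symm).1 hval
  -- lower bound
  have hlb : ∀ m ∈ {m | ∃ cv ce, IsTotalColoring G m cv ce}, N ≤ m := by
    rintro m ⟨cv, ce, hsym, hvp, hep, hev⟩
    haveI : Nonempty W := ⟨x0⟩
    obtain ⟨w₀, hw₀⟩ := H.exists_maximal_degree_vertex
    set i₀ : Fin n := ⟨0, by omega⟩ with hi₀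
    set v₀ : Fin n × W := (i₀, w₀) with hv₀
    have hT : (G.neighborFinset v₀).card = (n-1) * Δ := by
      have heq : G.neighborFinset v₀ =
          (Finset.univ.filter (fun a : Fin n => ¬ a = i₀)) ×ˢ
          (Finset.univ.filter (H.Adj w₀)) := by
        ext u
        simp only [SimpleGraph.mem_neighborFinset, Finset.mem_product, Finset.mem_filter,
          Finset.mem_univ, true_and]
        rw [hadj]
        constructor
        · rintro ⟨a, b⟩; exact ⟨Ne.symm a, b⟩
        · rintro ⟨a, b⟩; exact ⟨Ne.symm a, b⟩
      rw [heq, Finset.card_product]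
      have c1 : (Finset.univ.filter (fun a : Fin n => ¬ a = i₀)).card = n - 1 := by
        rw [Finset.filter_not, Finset.filter_eq']
        simp [Finset.card_sdiff_of_subset, Finset.card_univ]
      have c2 : (Finset.univ.filter (H.Adj w₀)).card = Δ := by
        rw [← SimpleGraph.neighborFinset_eq_filter]
        exact (hw₀).symm
      rw [c1, c2]
    have hinj : Set.InjOn (fun u => ce v₀ u) (G.neighborFinset v₀ : Set (Fin n × W)) := by
      intro u hu u' hu' h
      by_contra hne
      exact hep v₀ u u' (by simpa using hu) (by simpa using hu') hne h
    have hmaps : ∀ u ∈ G.neighborFinset v₀, ce v₀ u ∈ Finset.univ.erase (cv v₀) := by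
      intro u hu
      rw [Finset.mem_erase]
      exact ⟨(hev v₀ u (by simpa using hu)).1, Finset.mem_univ _⟩
    have hcard := Finset.card_le_card_of_injOn _ hmaps hinj
    rw [hT, Finset.card_erase_of_mem (Finset.mem_univ _), Finset.card_univ,
      Fintype.card_fin] at hcard
    have hpos : 1 ≤ (n-1) * Δ := Nat.mul_pos (by omega) hΔ1
    omega
  -- conclude
  rw [totalChromaticNumber]
  exact le_antisymm (Nat.sInf_le hmem) (le_csInf ⟨N, hmem⟩ hlb)
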